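/- (Weak corrector equation for the limiting gradient.) Let Φ ∈ L²(Ω,ℙ;ℝ^d) be the limit in L²(Ω,ℙ;ℝ^d) of Dφ_μ as μ → 0⁺ (which exists). Then for every ψ ∈ L²(Ω,ℙ): E[Dψ · A(ξ + Φ)] = 0. -/

import Mathlib

open MeasureTheory

namespace StochHom

/-- Edges of `ℤ^d`, indexed by their base vertex and their direction:
the pair `(x, i)` represents the edge `(x, x + eᵢ)`. -/
abbrev Edge (d : ℕ) := (Fin d → ℤ) × Fin d

/-- Environments: conductance functions `ω : 𝔹 → ℝ` (with values in `[α,β]`). -/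
abbrev Env (d : ℕ) := Edge d → ℝ

/-- The coordinate unit vector `eᵢ` of `ℤ^d`. -/
def unit {d : ℕ} (i : Fin d) : Fin d → ℤ := Pi.single i 1

/-- The shift `θ_z` of the environment: `(θ_z ω)_{(x,y)} = ω_{(x+z,y+z)}`. -/
def shift {d : ℕ} (z : Fin d → ℤ) (ω : Env d) : Env d :=
  fun e => ω (e.1 + z, e.2)

/-- Forward difference `Dᵢψ(ω) = ψ(θ_{eᵢ}ω) − ψ(ω)`. -/
def Dgrad {d : ℕ} (ψ : Env d → ℝ) (i : Fin d) (ω : Env d) : ℝ :=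
  ψ (shift (unit i) ω) - ψ ω

/-- Backward difference `Dᵢ*ψ(ω) = ψ(ω) − ψ(θ_{−eᵢ}ω)`. -/
def DgradStar {d : ℕ} (ψ : Env d → ℝ) (i : Fin d) (ω : Env d) : ℝ :=
  ψ ω - ψ (shift (-unit i) ω)

/-- The operator `𝓛ψ(ω) = Σ_{z∼0} ω_{(0,z)} (ψ(ω) − ψ(θ_z ω))`, the sum running over the
`2d` nearest neighbors `z` of `0` in `ℤ^d`.  The conductance of the edge `(0, eᵢ)` is
`ω (0, i)` and that of the edge `(0, −eᵢ)` is `ω (−eᵢ, i)`. -/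
def genL {d : ℕ} (ψ : Env d → ℝ) (ω : Env d) : ℝ :=
  ∑ i : Fin d,
    (ω (0, i) * (ψ ω - ψ (shift (unit i) ω))
      + ω (-unit i, i) * (ψ ω - ψ (shift (-unit i) ω)))

/-- The local drift `𝔡(ω) = Σ_{z∼0} ω_{(0,z)} (ξ·z)` in the direction `ξ`. -/
def drift {d : ℕ} (ξ : Fin d → ℝ) (ω : Env d) : ℝ :=
  ∑ i : Fin d, (ω (0, i) * ξ i + ω (-unit i, i) * (-ξ i))


set_option linter.unusedSectionVars false

section Aux
variable {d : ℕ}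

lemma shift_shift (z w : Fin d → ℤ) (ω : Env d) : shift z (shift w ω) = shift (w + z) ω := by
  funext e
  show ω (e.1 + z + w, e.2) = ω (e.1 + (w + z), e.2)
  rw [add_assoc, add_comm z w]

lemma shift_zero (ω : Env d) : shift 0 ω = ω := by
  funext e
  show ω (e.1 + 0, e.2) = ω e
  rw [add_zero]

lemma measurable_shift (z : Fin d → ℤ) : Measurable (shift z : Env d → Env d) :=
  measurable_pi_lambda _ fun _ => measurable_pi_apply _

/-- The shift as a measurable equivalence. -/
def shiftE (z : Fin d → ℤ) : Env d ≃ᵐ Env d where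
  toFun := shift z
  invFun := shift (-z)
  left_inv ω := by rw [shift_shift, add_neg_cancel, shift_zero]
  right_inv ω := by rw [shift_shift, neg_add_cancel, shift_zero]
  measurable_toFun := measurable_shift z
  measurable_invFun := measurable_shift (-z)

lemma shift_cancel (i : Fin d) (ω : Env d) : shift (-unit i) (shift (unit i) ω) = ω := by
  rw [shift_shift, add_neg_cancel, shift_zero]

lemma shift_coord (i : Fin d) (ω : Env d) :
    shift (unit i) ω (-unit i, i) = ω (0, i) := by
  show ω (-unit i + unit i, i) = ω (0, i)
  rw [neg_add_cancel]

set_option linter.unusedSectionVars false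

variable {P : Measure (Env d)} [IsProbabilityMeasure P]

lemma integral_shift (hs : ∀ z : Fin d → ℤ, MeasurePreserving (shift z) P P)
    (z : Fin d → ℤ) (g : Env d → ℝ) :
    ∫ ω, g (shift z ω) ∂P = ∫ ω, g ω ∂P :=
  (hs z).integral_comp (shiftE z).measurableEmbedding g

lemma memL2_shift (hs : ∀ z : Fin d → ℤ, MeasurePreserving (shift z) P P)
    {g : Env d → ℝ} (hg : MemLp g 2 P) (z : Fin d → ℤ) :
    MemLp (fun ω => g (shift z ω)) 2 P :=
  hg.comp_measurePreserving (hs z)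

lemma memL2_Dgrad (hs : ∀ z : Fin d → ℤ, MeasurePreserving (shift z) P P)
    {g : Env d → ℝ} (hg : MemLp g 2 P) (i : Fin d) : MemLp (Dgrad g i) 2 P :=
  (memL2_shift hs hg (unit i)).sub hg

lemma integrable_mul₂ {f g : Env d → ℝ} (hf : MemLp f 2 P) (hg : MemLp g 2 P) :
    Integrable (fun ω => f ω * g ω) P := by
  refine Integrable.mono' (g := fun ω => (f ω ^ 2 + g ω ^ 2) / 2)
    ((hf.integrable_sq.add hg.integrable_sq).div_const 2) (hf.1.mul hg.1) ?_
  filter_upwards with ω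
  rw [Real.norm_eq_abs, abs_mul]
  nlinarith [sq_nonneg (|f ω| - |g ω|), abs_nonneg (f ω), abs_nonneg (g ω),
    sq_abs (f ω), sq_abs (g ω)]

lemma memL2_bmul {b f : Env d → ℝ} {C : ℝ} (hb : AEStronglyMeasurable b P)
    (hC : ∀ᵐ ω ∂P, |b ω| ≤ C) (hf : MemLp f 2 P) :
    MemLp (fun ω => b ω * f ω) 2 P := by
  refine MemLp.of_le_mul (c := C) hf (hb.mul hf.1) ?_
  filter_upwards [hC] with ω hω
  rw [Real.norm_eq_abs, abs_mul, Real.norm_eq_abs]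
  exact mul_le_mul_of_nonneg_right hω (abs_nonneg _)

lemma integrable_cmul {b f g : Env d → ℝ} {C : ℝ} (hb : AEStronglyMeasurable b P)
    (hC : ∀ᵐ ω ∂P, |b ω| ≤ C) (hf : MemLp f 2 P) (hg : MemLp g 2 P) :
    Integrable (fun ω => g ω * (b ω * f ω)) P :=
  (integrable_mul₂ (memL2_bmul hb hC hf) hg).congr
    (Filter.Eventually.of_forall fun ω => mul_comm _ _)

/-- Cauchy–Schwarz. -/
lemma cauchyS {f g : Env d → ℝ} (hf : MemLp f 2 P) (hg : MemLp g 2 P) :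
    |∫ ω, f ω * g ω ∂P| ≤
      Real.sqrt (∫ ω, f ω ^ 2 ∂P) * Real.sqrt (∫ ω, g ω ^ 2 ∂P) := by
  have h22 : (2 : ℝ).HolderConjugate 2 := Real.HolderConjugate.two_two
  have h2 : ENNReal.ofReal (2 : ℝ) = 2 := by
    rw [ENNReal.ofReal_ofNat]
  have hf2 : MemLp f (ENNReal.ofReal (2 : ℝ)) P := by rw [h2]; exact hf
  have hg2 : MemLp g (ENNReal.ofReal (2 : ℝ)) P := by rw [h2]; exact hg
  have key := integral_mul_norm_le_Lp_mul_Lq h22 hf2 hg2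
  have habs : |∫ ω, f ω * g ω ∂P| ≤ ∫ ω, ‖f ω‖ * ‖g ω‖ ∂P := by
    calc |∫ ω, f ω * g ω ∂P| = ‖∫ ω, f ω * g ω ∂P‖ := (Real.norm_eq_abs _).symm
      _ ≤ ∫ ω, ‖f ω * g ω‖ ∂P := norm_integral_le_integral_norm _
      _ = ∫ ω, ‖f ω‖ * ‖g ω‖ ∂P := by simp_rw [norm_mul]
  have epow : ∀ h : Env d → ℝ, ∫ ω, ‖h ω‖ ^ (2 : ℝ) ∂P = ∫ ω, h ω ^ 2 ∂P := by
    intro h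
    refine integral_congr_ae (Filter.Eventually.of_forall fun ω => ?_)
    have : ‖h ω‖ ^ (2 : ℝ) = h ω ^ 2 := by
      rw [show (2 : ℝ) = ((2 : ℕ) : ℝ) by norm_num, Real.rpow_natCast,
        Real.norm_eq_abs, sq_abs]
    simpa using this
  rw [epow f, epow g] at key
  calc |∫ ω, f ω * g ω ∂P| ≤ ∫ ω, ‖f ω‖ * ‖g ω‖ ∂P := habs
    _ ≤ (∫ ω, f ω ^ 2 ∂P) ^ (1 / (2:ℝ)) * (∫ ω, g ω ^ 2 ∂P) ^ (1 / (2:ℝ)) := key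
    _ = Real.sqrt (∫ ω, f ω ^ 2 ∂P) * Real.sqrt (∫ ω, g ω ^ 2 ∂P) := by
        rw [Real.sqrt_eq_rpow, Real.sqrt_eq_rpow]

end Aux

section IBP
variable {d : ℕ}

variable {P : Measure (Env d)} [IsProbabilityMeasure P]
  {α β : ℝ}

set_option synthInstance.maxHeartbeats 1000000

/-- a.e. coordinate bound. -/
lemma coord_bound (hα : 0 < α) (hsupp : ∀ᵐ ω ∂P, ∀ e, ω e ∈ Set.Icc α β)
    (e : Edge d) : ∀ᵐ ω ∂P, |ω e| ≤ β := by
  filter_upwards [hsupp] with ω h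
  have := h e
  rw [Set.mem_Icc] at this
  rw [abs_le]
  constructor <;> linarith [this.1, this.2]

lemma coord_aesm (e : Edge d) : AEStronglyMeasurable (fun ω : Env d => ω e) P :=
  (measurable_pi_apply e).aestronglyMeasurable

/-- Integration by parts / change of variables for the backward term. -/
lemma ibp_term (hs : ∀ z : Fin d → ℤ, MeasurePreserving (shift z) P P)
    (i : Fin d) (g f : Env d → ℝ) :
    ∫ ω, g ω * (ω (-unit i, i) * (f ω - f (shift (-unit i) ω))) ∂P
      = ∫ ω, g (shift (unit i) ω) * (ω (0, i) * (f (shift (unit i) ω) - f ω)) ∂P := by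
  rw [← integral_shift hs (unit i)
    (fun ω => g ω * (ω (-unit i, i) * (f ω - f (shift (-unit i) ω))))]
  refine integral_congr_ae (Filter.Eventually.of_forall fun ω => ?_)
  simp only [shift_coord, shift_cancel]

lemma ibp_term' (hs : ∀ z : Fin d → ℤ, MeasurePreserving (shift z) P P)
    (i : Fin d) (g : Env d → ℝ) (c : ℝ) :
    ∫ ω, g ω * (ω (-unit i, i) * c) ∂P
      = ∫ ω, g (shift (unit i) ω) * (ω (0, i) * c) ∂P := by
  rw [← integral_shift hs (unit i) (fun ω => g ω * (ω (-unit i, i) * c))]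
  refine integral_congr_ae (Filter.Eventually.of_forall fun ω => ?_)
  simp only [shift_coord]

/-- Pairing with the generator: `∫ g 𝓛f = ∑ᵢ ∫ ωᵢ Dᵢg Dᵢf`. -/
lemma pair_genL (hs : ∀ z : Fin d → ℤ, MeasurePreserving (shift z) P P)
    (hα : 0 < α) (hsupp : ∀ᵐ ω ∂P, ∀ e, ω e ∈ Set.Icc α β)
    {f g : Env d → ℝ} (hf : MemLp f 2 P) (hg : MemLp g 2 P) :
    ∫ ω, g ω * genL f ω ∂P
      = ∑ i : Fin d, ∫ ω, ω (0, i) * (Dgrad g i ω * Dgrad f i ω) ∂P := by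
  have hb : ∀ e : Edge d, ∀ᵐ ω ∂P, |ω e| ≤ β := coord_bound hα hsupp
  have I1 : ∀ i : Fin d, Integrable
      (fun ω => g ω * (ω (0, i) * (f ω - f (shift (unit i) ω)))) P :=
    fun i => integrable_cmul (coord_aesm _) (hb _) (hf.sub (memL2_shift hs hf _)) hg
  have I2 : ∀ i : Fin d, Integrable
      (fun ω => g ω * (ω (-unit i, i) * (f ω - f (shift (-unit i) ω)))) P :=
    fun i => integrable_cmul (coord_aesm _) (hb _) (hf.sub (memL2_shift hs hf _)) hg
  have I3 : ∀ i : Fin d, Integrable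
      (fun ω => g (shift (unit i) ω) * (ω (0, i) * (f (shift (unit i) ω) - f ω))) P :=
    fun i => integrable_cmul (coord_aesm _) (hb _) ((memL2_shift hs hf _).sub hf)
      (memL2_shift hs hg _)
  calc ∫ ω, g ω * genL f ω ∂P
      = ∫ ω, ∑ i : Fin d, (g ω * (ω (0, i) * (f ω - f (shift (unit i) ω)))
          + g ω * (ω (-unit i, i) * (f ω - f (shift (-unit i) ω)))) ∂P := by
        refine integral_congr_ae (Filter.Eventually.of_forall fun ω => ?_)
        simp [genL, Finset.mul_sum, mul_add, mul_assoc]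
    _ = ∑ i : Fin d, ∫ ω, (g ω * (ω (0, i) * (f ω - f (shift (unit i) ω)))
          + g ω * (ω (-unit i, i) * (f ω - f (shift (-unit i) ω)))) ∂P :=
        integral_finset_sum _ (fun i _ => (I1 i).add (I2 i))
    _ = ∑ i : Fin d, ∫ ω, ω (0, i) * (Dgrad g i ω * Dgrad f i ω) ∂P := by
        refine Finset.sum_congr rfl fun i _ => ?_
        rw [integral_add (I1 i) (I2 i), ibp_term hs i g f, ← integral_add (I1 i) (I3 i)]
        refine integral_congr_ae (Filter.Eventually.of_forall fun ω => ?_)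
        simp only [Dgrad]
        ring

/-- Pairing with the drift: `∑ᵢ ξᵢ ∫ ωᵢ Dᵢg = - ∫ g 𝔡`. -/
lemma pair_drift (hs : ∀ z : Fin d → ℤ, MeasurePreserving (shift z) P P)
    (hα : 0 < α) (hsupp : ∀ᵐ ω ∂P, ∀ e, ω e ∈ Set.Icc α β)
    {g : Env d → ℝ} (hg : MemLp g 2 P) (ξ : Fin d → ℝ) :
    ∑ i : Fin d, ∫ ω, ω (0, i) * (Dgrad g i ω * ξ i) ∂P
      = - ∫ ω, g ω * drift ξ ω ∂P := by
  have hb : ∀ e : Edge d, ∀ᵐ ω ∂P, |ω e| ≤ β := coord_bound hα hsupp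
  have hconst : ∀ c : ℝ, MemLp (fun _ : Env d => c) 2 P := fun c => memLp_const c
  have I1 : ∀ i : Fin d, Integrable (fun ω => g ω * (ω (0, i) * ξ i)) P :=
    fun i => integrable_cmul (coord_aesm _) (hb _) (hconst _) hg
  have I2 : ∀ i : Fin d, Integrable (fun ω => g ω * (ω (-unit i, i) * (-ξ i))) P :=
    fun i => integrable_cmul (coord_aesm _) (hb _) (hconst _) hg
  have I3 : ∀ i : Fin d, Integrable (fun ω => g (shift (unit i) ω) * (ω (0, i) * (-ξ i))) P :=
    fun i => integrable_cmul (coord_aesm _) (hb _) (hconst _) (memL2_shift hs hg _)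
  have main : ∫ ω, g ω * drift ξ ω ∂P
      = ∑ i : Fin d, ∫ ω, (g ω * (ω (0, i) * ξ i)
          + g (shift (unit i) ω) * (ω (0, i) * (-ξ i))) ∂P := by
    calc ∫ ω, g ω * drift ξ ω ∂P
        = ∫ ω, ∑ i : Fin d, (g ω * (ω (0, i) * ξ i)
            + g ω * (ω (-unit i, i) * (-ξ i))) ∂P := by
          refine integral_congr_ae (Filter.Eventually.of_forall fun ω => ?_)
          simp [drift, Finset.mul_sum, mul_add, mul_assoc]
      _ = ∑ i : Fin d, ∫ ω, (g ω * (ω (0, i) * ξ i)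
            + g ω * (ω (-unit i, i) * (-ξ i))) ∂P :=
          integral_finset_sum _ (fun i _ => (I1 i).add (I2 i))
      _ = ∑ i : Fin d, ∫ ω, (g ω * (ω (0, i) * ξ i)
            + g (shift (unit i) ω) * (ω (0, i) * (-ξ i))) ∂P := by
          refine Finset.sum_congr rfl fun i _ => ?_
          rw [integral_add (I1 i) (I2 i), ibp_term' hs i g (-ξ i),
            ← integral_add (I1 i) (I3 i)]
  rw [main, ← Finset.sum_neg_distrib]
  refine Finset.sum_congr rfl fun i _ => ?_
  rw [← integral_neg]
  refine integral_congr_ae (Filter.Eventually.of_forall fun ω => ?_)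
  simp only [Dgrad]
  ring

end IBP

section Main
variable {d : ℕ} {P : Measure (Env d)} [IsProbabilityMeasure P] {α β : ℝ}

set_option synthInstance.maxHeartbeats 1000000

lemma integrable_cmul₂ {b f g : Env d → ℝ} {C : ℝ} (hb : AEStronglyMeasurable b P)
    (hC : ∀ᵐ ω ∂P, |b ω| ≤ C) (hf : MemLp f 2 P) (hg : MemLp g 2 P) :
    Integrable (fun ω => b ω * (f ω * g ω)) P :=
  (integrable_mul₂ (memL2_bmul hb hC hf) hg).congr
    (Filter.Eventually.of_forall fun ω => by ring)

/-- The tested corrector equation. -/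
lemma main_identity (hs : ∀ z : Fin d → ℤ, MeasurePreserving (shift z) P P)
    (hα : 0 < α) (hsupp : ∀ᵐ ω ∂P, ∀ e, ω e ∈ Set.Icc α β) (ξ : Fin d → ℝ)
    {f ψ : Env d → ℝ} (hfL : MemLp f 2 P) (hψ : MemLp ψ 2 P) {μ : ℝ}
    (heq : ∀ᵐ ω ∂P, μ * f ω + genL f ω = drift ξ ω) :
    ∑ i : Fin d, ∫ ω, ω (0, i) * (Dgrad ψ i ω * (ξ i + Dgrad f i ω)) ∂P
      = - (μ * ∫ ω, ψ ω * f ω ∂P) := by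
  have hb : ∀ e : Edge d, ∀ᵐ ω ∂P, |ω e| ≤ β := coord_bound hα hsupp
  have Ig1 : ∀ i : Fin d, Integrable
      (fun ω => ψ ω * (ω (0, i) * (f ω - f (shift (unit i) ω)))) P :=
    fun i => integrable_cmul (coord_aesm _) (hb _) (hfL.sub (memL2_shift hs hfL _)) hψ
  have Ig2 : ∀ i : Fin d, Integrable
      (fun ω => ψ ω * (ω (-unit i, i) * (f ω - f (shift (-unit i) ω)))) P :=
    fun i => integrable_cmul (coord_aesm _) (hb _) (hfL.sub (memL2_shift hs hfL _)) hψ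
  have Iglf : Integrable (fun ω => ψ ω * genL f ω) P := by
    have h := integrable_finset_sum (μ := P) Finset.univ (fun i _ => (Ig1 i).add (Ig2 i))
    exact h.congr (Filter.Eventually.of_forall fun ω => by
      simp [genL, Finset.mul_sum, mul_add, mul_assoc])
  have Iψf : Integrable (fun ω => ψ ω * f ω) P := integrable_mul₂ hψ hfL
  have key : μ * (∫ ω, ψ ω * f ω ∂P) + ∫ ω, ψ ω * genL f ω ∂P
      = ∫ ω, ψ ω * drift ξ ω ∂P := by
    have h1 : ∫ ω, (μ * (ψ ω * f ω) + ψ ω * genL f ω) ∂P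
        = ∫ ω, ψ ω * drift ξ ω ∂P := by
      refine integral_congr_ae ?_
      filter_upwards [heq] with ω h
      calc μ * (ψ ω * f ω) + ψ ω * genL f ω = ψ ω * (μ * f ω + genL f ω) := by ring
        _ = ψ ω * drift ξ ω := by rw [h]
    rw [← h1, integral_add (Iψf.const_mul μ) Iglf, integral_const_mul μ]
  have J1 : ∀ i : Fin d, Integrable (fun ω => ω (0, i) * (Dgrad ψ i ω * ξ i)) P :=
    fun i => integrable_cmul₂ (coord_aesm _) (hb _) (memL2_Dgrad hs hψ i) (memLp_const _)
  have J2 : ∀ i : Fin d, Integrable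
      (fun ω => ω (0, i) * (Dgrad ψ i ω * Dgrad f i ω)) P :=
    fun i => integrable_cmul₂ (coord_aesm _) (hb _) (memL2_Dgrad hs hψ i) (memL2_Dgrad hs hfL i)
  calc ∑ i : Fin d, ∫ ω, ω (0, i) * (Dgrad ψ i ω * (ξ i + Dgrad f i ω)) ∂P
      = ∑ i : Fin d, (∫ ω, ω (0, i) * (Dgrad ψ i ω * ξ i) ∂P
          + ∫ ω, ω (0, i) * (Dgrad ψ i ω * Dgrad f i ω) ∂P) := by
        refine Finset.sum_congr rfl fun i _ => ?_
        rw [← integral_add (J1 i) (J2 i)]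
        exact integral_congr_ae (Filter.Eventually.of_forall fun ω => by ring)
    _ = (∑ i : Fin d, ∫ ω, ω (0, i) * (Dgrad ψ i ω * ξ i) ∂P)
          + ∑ i : Fin d, ∫ ω, ω (0, i) * (Dgrad ψ i ω * Dgrad f i ω) ∂P :=
        Finset.sum_add_distrib
    _ = - (μ * ∫ ω, ψ ω * f ω ∂P) := by
        rw [pair_drift hs hα hsupp hψ ξ, ← pair_genL hs hα hsupp hfL hψ]
        linarith [key]

/-- A priori bound: `μ ‖φ_μ‖² ≤ C`. -/
lemma apriori (hs : ∀ z : Fin d → ℤ, MeasurePreserving (shift z) P P)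
    (hα : 0 < α) (hαβ : α ≤ β) (hsupp : ∀ᵐ ω ∂P, ∀ e, ω e ∈ Set.Icc α β)
    (ξ : Fin d → ℝ) {f : Env d → ℝ} (hfL : MemLp f 2 P) {μ : ℝ}
    (heq : ∀ᵐ ω ∂P, μ * f ω + genL f ω = drift ξ ω) :
    μ * ∫ ω, f ω ^ 2 ∂P ≤ ∑ i : Fin d, (β * |ξ i|) ^ 2 / (4 * α) := by
  have hβ : 0 ≤ β := le_trans hα.le hαβ
  have hb : ∀ e : Edge d, ∀ᵐ ω ∂P, |ω e| ≤ β := coord_bound hα hsupp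
  have hmain := main_identity hs hα hsupp ξ hfL hfL heq
  have hsq : ∫ ω, f ω * f ω ∂P = ∫ ω, f ω ^ 2 ∂P :=
    integral_congr_ae (Filter.Eventually.of_forall fun ω => (sq (f ω)).symm)
  have per : ∀ i : Fin d,
      - ∫ ω, ω (0, i) * (Dgrad f i ω * (ξ i + Dgrad f i ω)) ∂P
        ≤ (β * |ξ i|) ^ 2 / (4 * α) := by
    intro i
    have hD : MemLp (Dgrad f i) 2 P := memL2_Dgrad hs hfL i
    set N := Real.sqrt (∫ ω, Dgrad f i ω ^ 2 ∂P) with hNdef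
    have hNnn : 0 ≤ N := Real.sqrt_nonneg _
    have hNsq : N ^ 2 = ∫ ω, Dgrad f i ω ^ 2 ∂P :=
      Real.sq_sqrt (integral_nonneg fun ω => sq_nonneg _)
    have hcmem : MemLp (fun ω : Env d => ω (0, i)) 2 P := by
      refine MemLp.of_bound (coord_aesm _) β ?_
      filter_upwards [hb (0, i)] with ω h
      rwa [Real.norm_eq_abs]
    have J1 : Integrable (fun ω => ω (0, i) * (Dgrad f i ω * ξ i)) P :=
      integrable_cmul₂ (coord_aesm _) (hb _) hD (memLp_const _)
    have J2 : Integrable (fun ω => ω (0, i) * (Dgrad f i ω * Dgrad f i ω)) P :=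
      integrable_cmul₂ (coord_aesm _) (hb _) hD hD
    have hsplit : ∫ ω, ω (0, i) * (Dgrad f i ω * (ξ i + Dgrad f i ω)) ∂P
        = ∫ ω, ω (0, i) * (Dgrad f i ω * ξ i) ∂P
          + ∫ ω, ω (0, i) * (Dgrad f i ω * Dgrad f i ω) ∂P := by
      rw [← integral_add J1 J2]
      exact integral_congr_ae (Filter.Eventually.of_forall fun ω => by ring)
    -- Cauchy–Schwarz for the first term
    have hc2 : ∫ ω, (ω (0, i)) ^ 2 ∂P ≤ β ^ 2 := by
      have hle : ∀ᵐ ω ∂P, (ω (0, i)) ^ 2 ≤ β ^ 2 := by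
        filter_upwards [hb (0, i)] with ω h
        calc (ω (0, i)) ^ 2 = |ω (0, i)| ^ 2 := (sq_abs _).symm
          _ ≤ β ^ 2 := by nlinarith [abs_nonneg (ω (0, i))]
      calc ∫ ω, (ω (0, i)) ^ 2 ∂P ≤ ∫ _, β ^ 2 ∂P :=
            integral_mono_ae hcmem.integrable_sq (integrable_const _) hle
        _ = β ^ 2 := by simp
    have hCS : |∫ ω, ω (0, i) * Dgrad f i ω ∂P| ≤ β * N := by
      have h1 := cauchyS hcmem hD
      calc |∫ ω, ω (0, i) * Dgrad f i ω ∂P|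
          ≤ Real.sqrt (∫ ω, (ω (0, i)) ^ 2 ∂P) * N := h1
        _ ≤ β * N := by
            refine mul_le_mul_of_nonneg_right ?_ hNnn
            calc Real.sqrt (∫ ω, (ω (0, i)) ^ 2 ∂P) ≤ Real.sqrt (β ^ 2) :=
                  Real.sqrt_le_sqrt hc2
              _ = β := Real.sqrt_sq hβ
    have hterm1 : - ∫ ω, ω (0, i) * (Dgrad f i ω * ξ i) ∂P ≤ |ξ i| * (β * N) := by
      have he : ∫ ω, ω (0, i) * (Dgrad f i ω * ξ i) ∂P
          = ξ i * ∫ ω, ω (0, i) * Dgrad f i ω ∂P := by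
        rw [← integral_const_mul (ξ i)]
        exact integral_congr_ae (Filter.Eventually.of_forall fun ω => by ring)
      rw [he]
      calc - (ξ i * ∫ ω, ω (0, i) * Dgrad f i ω ∂P)
          ≤ |ξ i * ∫ ω, ω (0, i) * Dgrad f i ω ∂P| := neg_le_abs _
        _ = |ξ i| * |∫ ω, ω (0, i) * Dgrad f i ω ∂P| := abs_mul _ _
        _ ≤ |ξ i| * (β * N) := mul_le_mul_of_nonneg_left hCS (abs_nonneg _)
    have hterm2 : α * N ^ 2 ≤ ∫ ω, ω (0, i) * (Dgrad f i ω * Dgrad f i ω) ∂P := by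
      have hle : ∀ᵐ ω ∂P, α * Dgrad f i ω ^ 2 ≤ ω (0, i) * (Dgrad f i ω * Dgrad f i ω) := by
        filter_upwards [hsupp] with ω h
        have h1 := (h (0, i)).1
        nlinarith [sq_nonneg (Dgrad f i ω)]
      calc α * N ^ 2 = ∫ ω, α * Dgrad f i ω ^ 2 ∂P := by
            rw [integral_const_mul α, hNsq]
        _ ≤ _ := integral_mono_ae (hD.integrable_sq.const_mul α) J2 hle
    rw [hsplit]
    rw [le_div_iff₀ (by positivity)]
    nlinarith [sq_nonneg (β * |ξ i| - 2 * α * N)]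
  calc μ * ∫ ω, f ω ^ 2 ∂P = - ∑ i : Fin d,
        ∫ ω, ω (0, i) * (Dgrad f i ω * (ξ i + Dgrad f i ω)) ∂P := by
        rw [hmain] at *
        rw [← hsq]
        linarith [hmain]
    _ = ∑ i : Fin d, - ∫ ω, ω (0, i) * (Dgrad f i ω * (ξ i + Dgrad f i ω)) ∂P :=
        (Finset.sum_neg_distrib _).symm
    _ ≤ ∑ i : Fin d, (β * |ξ i|) ^ 2 / (4 * α) := Finset.sum_le_sum fun i _ => per i

end Main


set_option synthInstance.maxHeartbeats 1000000
set_option maxHeartbeats 2000000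

/-- weak corrector equation for the limiting gradient: if `Φ` is the
L²-limit of `Dφ_μ` as `μ → 0⁺`, then for every `ψ ∈ L²(Ω,ℙ)`,
`E[Dψ · A(ξ + Φ)] = 0`. -/
theorem statement8 {d : ℕ} (hd : 1 ≤ d) {α β : ℝ} (hα : 0 < α) (hαβ : α ≤ β)
    (P : Measure (Env d)) [IsProbabilityMeasure P]
    (hsupp : ∀ᵐ ω ∂P, ∀ e, ω e ∈ Set.Icc α β)
    (hshift : ∀ z : Fin d → ℤ, MeasurePreserving (shift z) P P)
    (ξ : Fin d → ℝ) (φ : ℝ → Env d → ℝ)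
    (hφ : ∀ μ : ℝ, 0 < μ → MemLp (φ μ) 2 P ∧
      (∀ᵐ ω ∂P, μ * φ μ ω + genL (φ μ) ω = drift ξ ω))
    (Φ : Fin d → Env d → ℝ) (hΦ : ∀ i, MemLp (Φ i) 2 P)
    (hlim : Filter.Tendsto
      (fun μ : ℝ => ∫ ω, ∑ i : Fin d, (Dgrad (φ μ) i ω - Φ i ω) ^ 2 ∂P)
      (nhdsWithin 0 (Set.Ioi 0)) (nhds 0)) :
    ∀ ψ : Env d → ℝ, MemLp ψ 2 P →
      ∫ ω, ∑ i : Fin d, ω (0, i) * (Dgrad ψ i ω * (ξ i + Φ i ω)) ∂P = 0 := by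
  intro ψ hψ
  have hβ : 0 ≤ β := le_trans hα.le hαβ
  have hb : ∀ e : Edge d, ∀ᵐ ω ∂P, |ω e| ≤ β := coord_bound hα hsupp
  set Cb : ℝ := ∑ i : Fin d, (β * |ξ i|) ^ 2 / (4 * α) with hCb
  set Nψ : ℝ := Real.sqrt (∫ ω, ψ ω ^ 2 ∂P) with hNψ
  set ND : Fin d → ℝ := fun i => Real.sqrt (∫ ω, Dgrad ψ i ω ^ 2 ∂P) with hND
  set CD : ℝ := ∑ i : Fin d, β * ND i with hCD
  set eps : ℝ → ℝ := fun μ => ∫ ω, ∑ i : Fin d, (Dgrad (φ μ) i ω - Φ i ω) ^ 2 ∂P with heps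
  set T : ℝ := ∫ ω, ∑ i : Fin d, ω (0, i) * (Dgrad ψ i ω * (ξ i + Φ i ω)) ∂P with hT
  have K1 : ∀ i : Fin d,
      Integrable (fun ω => ω (0, i) * (Dgrad ψ i ω * (ξ i + Φ i ω))) P :=
    fun i => integrable_cmul₂ (coord_aesm _) (hb _) (memL2_Dgrad hshift hψ i)
      ((memLp_const (μ := P) (ξ i)).add (hΦ i))
  have hTsum : T = ∑ i : Fin d, ∫ ω, ω (0, i) * (Dgrad ψ i ω * (ξ i + Φ i ω)) ∂P := by
    rw [hT]
    exact integral_finset_sum _ (fun i _ => K1 i)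
  -- the key quantitative bound, for every μ > 0
  have bound : ∀ μ : ℝ, 0 < μ →
      |T| ≤ Real.sqrt μ * Real.sqrt Cb * Nψ + CD * Real.sqrt (eps μ) := by
    intro μ hμ
    obtain ⟨hφL, heq⟩ := hφ μ hμ
    have hmain := main_identity hshift hα hsupp ξ hφL hψ heq
    have K2 : ∀ i : Fin d,
        Integrable (fun ω => ω (0, i) * (Dgrad ψ i ω * (ξ i + Dgrad (φ μ) i ω))) P :=
      fun i => integrable_cmul₂ (coord_aesm _) (hb _) (memL2_Dgrad hshift hψ i)
        ((memLp_const (μ := P) (ξ i)).add (memL2_Dgrad hshift hφL i))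
    have K3 : ∀ i : Fin d,
        Integrable (fun ω => ω (0, i) * (Dgrad ψ i ω * (Φ i ω - Dgrad (φ μ) i ω))) P :=
      fun i => integrable_cmul₂ (coord_aesm _) (hb _) (memL2_Dgrad hshift hψ i)
        ((hΦ i).sub (memL2_Dgrad hshift hφL i))
    have split : ∀ i : Fin d,
        ∫ ω, ω (0, i) * (Dgrad ψ i ω * (ξ i + Φ i ω)) ∂P
          = ∫ ω, ω (0, i) * (Dgrad ψ i ω * (ξ i + Dgrad (φ μ) i ω)) ∂P
            + ∫ ω, ω (0, i) * (Dgrad ψ i ω * (Φ i ω - Dgrad (φ μ) i ω)) ∂P := by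
      intro i
      rw [← integral_add (K2 i) (K3 i)]
      exact integral_congr_ae (Filter.Eventually.of_forall fun ω => by ring)
    have hTdecomp : T = - (μ * ∫ ω, ψ ω * φ μ ω ∂P)
        + ∑ i : Fin d, ∫ ω, ω (0, i) * (Dgrad ψ i ω * (Φ i ω - Dgrad (φ μ) i ω)) ∂P := by
      rw [hTsum]
      calc ∑ i : Fin d, ∫ ω, ω (0, i) * (Dgrad ψ i ω * (ξ i + Φ i ω)) ∂P
          = ∑ i : Fin d, (∫ ω, ω (0, i) * (Dgrad ψ i ω * (ξ i + Dgrad (φ μ) i ω)) ∂P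
              + ∫ ω, ω (0, i) * (Dgrad ψ i ω * (Φ i ω - Dgrad (φ μ) i ω)) ∂P) :=
            Finset.sum_congr rfl fun i _ => split i
        _ = _ := by rw [Finset.sum_add_distrib, hmain]
    -- bound the error terms
    have epsnn : 0 ≤ eps μ := integral_nonneg fun ω => Finset.sum_nonneg fun j _ => sq_nonneg _
    have Hsum : Integrable (fun ω => ∑ j : Fin d, (Dgrad (φ μ) j ω - Φ j ω) ^ 2) P :=
      integrable_finset_sum _ fun j _ =>
        ((memL2_Dgrad hshift hφL j).sub (hΦ j)).integrable_sq
    have Ebound : ∀ i : Fin d,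
        |∫ ω, ω (0, i) * (Dgrad ψ i ω * (Φ i ω - Dgrad (φ μ) i ω)) ∂P|
          ≤ β * ND i * Real.sqrt (eps μ) := by
      intro i
      have hDψ : MemLp (Dgrad ψ i) 2 P := memL2_Dgrad hshift hψ i
      have hFmem : MemLp (fun ω => ω (0, i) * Dgrad ψ i ω) 2 P :=
        memL2_bmul (coord_aesm _) (hb _) hDψ
      have hGmem : MemLp (fun ω => Φ i ω - Dgrad (φ μ) i ω) 2 P :=
        (hΦ i).sub (memL2_Dgrad hshift hφL i)
      have hrw : ∫ ω, ω (0, i) * (Dgrad ψ i ω * (Φ i ω - Dgrad (φ μ) i ω)) ∂P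
          = ∫ ω, (ω (0, i) * Dgrad ψ i ω) * (Φ i ω - Dgrad (φ μ) i ω) ∂P :=
        integral_congr_ae (Filter.Eventually.of_forall fun ω => by ring)
      have hF2 : Real.sqrt (∫ ω, (ω (0, i) * Dgrad ψ i ω) ^ 2 ∂P) ≤ β * ND i := by
        have hle : ∀ᵐ ω ∂P, (ω (0, i) * Dgrad ψ i ω) ^ 2 ≤ β ^ 2 * Dgrad ψ i ω ^ 2 := by
          filter_upwards [hb (0, i)] with ω h
          have h2 : (ω (0, i)) ^ 2 ≤ β ^ 2 := by
            calc (ω (0, i)) ^ 2 = |ω (0, i)| ^ 2 := (sq_abs _).symm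
              _ ≤ β ^ 2 := by nlinarith [abs_nonneg (ω (0, i))]
          nlinarith [sq_nonneg (Dgrad ψ i ω)]
        have hint : ∫ ω, (ω (0, i) * Dgrad ψ i ω) ^ 2 ∂P
            ≤ β ^ 2 * ∫ ω, Dgrad ψ i ω ^ 2 ∂P := by
          rw [← integral_const_mul (β ^ 2)]
          exact integral_mono_ae hFmem.integrable_sq
            (hDψ.integrable_sq.const_mul _) hle
        calc Real.sqrt (∫ ω, (ω (0, i) * Dgrad ψ i ω) ^ 2 ∂P)
            ≤ Real.sqrt (β ^ 2 * ∫ ω, Dgrad ψ i ω ^ 2 ∂P) := Real.sqrt_le_sqrt hint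
          _ = β * ND i := by
              rw [Real.sqrt_mul (sq_nonneg β), Real.sqrt_sq hβ, hND]
      have hG2 : Real.sqrt (∫ ω, (Φ i ω - Dgrad (φ μ) i ω) ^ 2 ∂P)
          ≤ Real.sqrt (eps μ) := by
        refine Real.sqrt_le_sqrt ?_
        rw [heps]
        refine integral_mono_ae hGmem.integrable_sq Hsum ?_
        refine Filter.Eventually.of_forall fun ω => ?_
        show (Φ i ω - Dgrad (φ μ) i ω) ^ 2 ≤ ∑ j : Fin d, (Dgrad (φ μ) j ω - Φ j ω) ^ 2
        have hsym : (Φ i ω - Dgrad (φ μ) i ω) ^ 2 = (Dgrad (φ μ) i ω - Φ i ω) ^ 2 := by ring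
        rw [hsym]
        exact Finset.single_le_sum (f := fun j => (Dgrad (φ μ) j ω - Φ j ω) ^ 2)
          (fun j _ => sq_nonneg _) (Finset.mem_univ i)
      calc |∫ ω, ω (0, i) * (Dgrad ψ i ω * (Φ i ω - Dgrad (φ μ) i ω)) ∂P|
          = |∫ ω, (ω (0, i) * Dgrad ψ i ω) * (Φ i ω - Dgrad (φ μ) i ω) ∂P| := by rw [hrw]
        _ ≤ Real.sqrt (∫ ω, (ω (0, i) * Dgrad ψ i ω) ^ 2 ∂P)
              * Real.sqrt (∫ ω, (Φ i ω - Dgrad (φ μ) i ω) ^ 2 ∂P) := cauchyS hFmem hGmem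
        _ ≤ (β * ND i) * Real.sqrt (eps μ) := by
            refine mul_le_mul hF2 hG2 (Real.sqrt_nonneg _) ?_
            positivity
    -- bound the mass term
    have hap := apriori hshift hα hαβ hsupp ξ hφL heq
    have hφ2nn : 0 ≤ ∫ ω, φ μ ω ^ 2 ∂P := integral_nonneg fun ω => sq_nonneg _
    have hmass : μ * |∫ ω, ψ ω * φ μ ω ∂P| ≤ Real.sqrt μ * Real.sqrt Cb * Nψ := by
      have hCS := cauchyS hψ hφL
      have step1 : μ * Real.sqrt (∫ ω, φ μ ω ^ 2 ∂P) ≤ Real.sqrt μ * Real.sqrt Cb := by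
        have h1 : μ * Real.sqrt (∫ ω, φ μ ω ^ 2 ∂P)
            = Real.sqrt (μ * (μ * ∫ ω, φ μ ω ^ 2 ∂P)) := by
          rw [show μ * (μ * ∫ ω, φ μ ω ^ 2 ∂P) = μ ^ 2 * ∫ ω, φ μ ω ^ 2 ∂P by ring,
            Real.sqrt_mul (sq_nonneg μ), Real.sqrt_sq hμ.le]
        rw [h1, ← Real.sqrt_mul hμ.le]
        exact Real.sqrt_le_sqrt (mul_le_mul_of_nonneg_left hap hμ.le)
      calc μ * |∫ ω, ψ ω * φ μ ω ∂P|
          ≤ μ * (Nψ * Real.sqrt (∫ ω, φ μ ω ^ 2 ∂P)) :=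
            mul_le_mul_of_nonneg_left hCS hμ.le
        _ = Nψ * (μ * Real.sqrt (∫ ω, φ μ ω ^ 2 ∂P)) := by ring
        _ ≤ Nψ * (Real.sqrt μ * Real.sqrt Cb) :=
            mul_le_mul_of_nonneg_left step1 (Real.sqrt_nonneg _)
        _ = Real.sqrt μ * Real.sqrt Cb * Nψ := by ring
    -- put everything together
    calc |T| ≤ μ * |∫ ω, ψ ω * φ μ ω ∂P|
          + |∑ i : Fin d, ∫ ω, ω (0, i) * (Dgrad ψ i ω * (Φ i ω - Dgrad (φ μ) i ω)) ∂P| := by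
          rw [hTdecomp]
          calc |_ + _| ≤ |-(μ * ∫ ω, ψ ω * φ μ ω ∂P)|
                + |∑ i : Fin d, ∫ ω, ω (0, i) * (Dgrad ψ i ω * (Φ i ω - Dgrad (φ μ) i ω)) ∂P| :=
              abs_add_le _ _
            _ = _ := by rw [abs_neg, abs_mul, abs_of_pos hμ]
      _ ≤ Real.sqrt μ * Real.sqrt Cb * Nψ + CD * Real.sqrt (eps μ) := by
          refine add_le_add hmass ?_
          calc |∑ i : Fin d, ∫ ω, ω (0, i) * (Dgrad ψ i ω * (Φ i ω - Dgrad (φ μ) i ω)) ∂P|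
              ≤ ∑ i : Fin d, |∫ ω, ω (0, i) * (Dgrad ψ i ω * (Φ i ω - Dgrad (φ μ) i ω)) ∂P| :=
              Finset.abs_sum_le_sum_abs _ _
            _ ≤ ∑ i : Fin d, β * ND i * Real.sqrt (eps μ) :=
              Finset.sum_le_sum fun i _ => Ebound i
            _ = CD * Real.sqrt (eps μ) := by rw [hCD, Finset.sum_mul]
  -- pass to the limit μ → 0⁺
  have hid : Filter.Tendsto (fun μ : ℝ => μ) (nhdsWithin 0 (Set.Ioi 0)) (nhds 0) :=
    Filter.tendsto_id.mono_left nhdsWithin_le_nhds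
  have h1 : Filter.Tendsto (fun μ : ℝ => Real.sqrt μ) (nhdsWithin 0 (Set.Ioi 0)) (nhds 0) := by
    have := (Real.continuous_sqrt.tendsto 0).comp hid
    simpa [Function.comp_def] using this
  have h2 : Filter.Tendsto (fun μ : ℝ => Real.sqrt (eps μ))
      (nhdsWithin 0 (Set.Ioi 0)) (nhds 0) := by
    have := (Real.continuous_sqrt.tendsto 0).comp hlim
    simpa [heps, Function.comp_def] using this
  have hten : Filter.Tendsto
      (fun μ : ℝ => Real.sqrt μ * Real.sqrt Cb * Nψ + CD * Real.sqrt (eps μ))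
      (nhdsWithin 0 (Set.Ioi 0)) (nhds 0) := by
    have := ((h1.mul_const (Real.sqrt Cb)).mul_const Nψ).add (h2.const_mul CD)
    simpa using this
  have hle : |T| ≤ 0 := by
    refine ge_of_tendsto hten ?_
    filter_upwards [self_mem_nhdsWithin] with μ hμ
    exact bound μ hμ
  exact abs_nonpos_iff.mp hle


end StochHom
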